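/- For every a ∈ (0,a*), the map ζ has a finite right derivative at a, given by ζ'₊(a) = H''₊(a)/H''₋(ζ(a)), where H''₊(a) denotes the right derivative of H' at a and H''₋(ζ(a)) denotes the left derivative of H' at ζ(a) (both of which exist by convexity of H', with H''₊(a) < 0 and H''₋(ζ(a)) > 0); in particular ζ'₊(a) < 0. -/

import Mathlib

open Set Filter Topology

lemma aux_right_deriv {f : ℝ → ℝ} (hf : ConvexOn ℝ (Set.Ioi 0) f) {x : ℝ} (hx : 0 < x) :
    ∃ d, HasDerivWithinAt f d (Set.Ici x) x := by
  have hmono : MonotoneOn (slope f x) (Ioi 0 \ {x}) := hf.slope_mono (mem_Ioi.mpr hx)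
  have hsub : Ioo x (x + 1) ⊆ Ioi (0:ℝ) \ {x} := fun y hy =>
    ⟨lt_trans hx hy.1, fun h => absurd (mem_singleton_iff.1 h) (ne_of_gt hy.1)⟩
  have hne : (Ioo x (x + 1)).Nonempty := ⟨x + 1/2, by constructor <;> linarith⟩
  have hw : x/2 ∈ Ioi (0:ℝ) \ {x} :=
    ⟨mem_Ioi.mpr (by linarith), by simp only [mem_singleton_iff]; intro h; linarith⟩
  have hbdd : BddBelow (slope f x '' Ioo x (x + 1)) := by
    refine ⟨slope f x (x/2), ?_⟩
    rintro u ⟨t, ht, rfl⟩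
    exact hmono hw (hsub ht) (by linarith [ht.1])
  have := MonotoneOn.tendsto_nhdsWithin_Ioo_right hne (hmono.mono hsub) hbdd
  refine ⟨sInf (slope f x '' Ioo x (x + 1)), ?_⟩
  rw [hasDerivWithinAt_iff_tendsto_slope, Set.Ici_sdiff_left]
  exact this

lemma aux_left_deriv {f : ℝ → ℝ} (hf : ConvexOn ℝ (Set.Ioi 0) f) {x : ℝ} (hx : 0 < x) :
    ∃ d, HasDerivWithinAt f d (Set.Iic x) x := by
  have hmono : MonotoneOn (slope f x) (Ioi 0 \ {x}) := hf.slope_mono (mem_Ioi.mpr hx)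
  have hsub : Ioo (x/2) x ⊆ Ioi (0:ℝ) \ {x} := fun y hy =>
    ⟨lt_trans (by linarith) hy.1, fun h => absurd (mem_singleton_iff.1 h) (ne_of_lt hy.2)⟩
  have hne : (Ioo (x/2) x).Nonempty := ⟨3*x/4, by constructor <;> linarith⟩
  have hw : x + 1 ∈ Ioi (0:ℝ) \ {x} :=
    ⟨mem_Ioi.mpr (by linarith), by simp only [mem_singleton_iff]; intro h; linarith⟩
  have hbdd : BddAbove (slope f x '' Ioo (x/2) x) := by
    refine ⟨slope f x (x + 1), ?_⟩
    rintro u ⟨t, ht, rfl⟩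
    exact hmono (hsub ht) hw (by linarith [ht.2])
  have := MonotoneOn.tendsto_nhdsWithin_Ioo_left hne (hmono.mono hsub) hbdd
  refine ⟨sSup (slope f x '' Ioo (x/2) x), ?_⟩
  rw [hasDerivWithinAt_iff_tendsto_slope, Set.Iic_diff_right]
  exact this

theorem stmt_7
    (H H' : ℝ → ℝ)
    (hHcont : ContinuousOn H (Set.Ici 0))
    (hHderiv : ∀ x ∈ Set.Ioi (0:ℝ), HasDerivAt H (H' x) x)
    (hH'pos : ∀ x ∈ Set.Ioi (0:ℝ), 0 < H' x)
    (hH'cont : ContinuousOn H' (Set.Ici 0))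
    (hH'top : Filter.Tendsto H' Filter.atTop Filter.atTop)
    (astar : ℝ) (hastar : 0 ≤ astar)
    (hH'dec : StrictAntiOn H' (Set.Ioo 0 astar))
    (hH'inc : StrictMonoOn H' (Set.Ioi astar))
    (hH'conv : ConvexOn ℝ (Set.Ioi 0) H')
    (hastar0 : 0 < astar)
    (ζ : ℝ → ℝ)
    (hζ : ∀ x ∈ Set.Ioo 0 astar, ζ x ∈ Set.Ioi astar ∧ H' (ζ x) = H' x)
    :
    ∀ a ∈ Set.Ioo 0 astar, ∃ dp dm : ℝ,
      HasDerivWithinAt H' dp (Set.Ici a) a ∧ dp < 0 ∧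
      HasDerivWithinAt H' dm (Set.Iic (ζ a)) (ζ a) ∧ 0 < dm ∧
      HasDerivWithinAt ζ (dp / dm) (Set.Ici a) a ∧ dp / dm < 0 := by
  intro a ha
  obtain ⟨ha0, haa⟩ := ha
  obtain ⟨hza1, hza2⟩ := hζ a ⟨ha0, haa⟩
  have hza0 : (0:ℝ) < ζ a := lt_trans hastar0 hza1
  obtain ⟨dp, hdp⟩ := aux_right_deriv hH'conv ha0
  obtain ⟨dm, hdm⟩ := aux_left_deriv hH'conv hza0
  -- dp < 0
  have hdpIoi : HasDerivWithinAt H' dp (Ioi a) a := hdp.mono Ioi_subset_Ici_self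
  have hdmIio : HasDerivWithinAt H' dm (Iio (ζ a)) (ζ a) := hdm.mono Iio_subset_Iic_self
  have hc : (a + astar)/2 ∈ Ioo a astar := ⟨by linarith, by linarith⟩
  have hdpneg : dp < 0 := by
    have h1 : dp ≤ slope H' a ((a + astar)/2) :=
      hH'conv.le_slope_of_hasDerivWithinAt_Ioi ha0 (lt_trans ha0 hc.1) hc.1 hdpIoi
    have h2 : H' ((a + astar)/2) < H' a := hH'dec ⟨ha0, haa⟩ ⟨lt_trans ha0 hc.1, hc.2⟩ hc.1
    have : slope H' a ((a + astar)/2) < 0 := by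
      rw [slope_def_field]
      apply div_neg_of_neg_of_pos <;> linarith
    linarith
  have hc' : (astar + ζ a)/2 ∈ Ioo astar (ζ a) := ⟨by linarith [mem_Ioi.1 hza1], by linarith [mem_Ioi.1 hza1]⟩
  have hdmpos : 0 < dm := by
    have h1 : slope H' ((astar + ζ a)/2) (ζ a) ≤ dm :=
      hH'conv.slope_le_of_hasDerivWithinAt_Iio (lt_trans hastar0 hc'.1) hza0 hc'.2 hdmIio
    have h2 : H' ((astar + ζ a)/2) < H' (ζ a) := hH'inc hc'.1 hza1 hc'.2
    have : 0 < slope H' ((astar + ζ a)/2) (ζ a) := by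
      rw [slope_def_field]
      apply div_pos <;> linarith [hc'.2]
    linarith
  -- key facts for y ∈ Ioo a astar
  have key : ∀ y ∈ Ioo a astar, ζ y ∈ Ioi astar ∧ H' (ζ y) = H' y ∧ H' y < H' a ∧ ζ y < ζ a := by
    intro y hy
    have hy' : y ∈ Ioo 0 astar := ⟨lt_trans ha0 hy.1, hy.2⟩
    obtain ⟨hzy1, hzy2⟩ := hζ y hy'
    have hlt : H' y < H' a := hH'dec ⟨ha0, haa⟩ hy' hy.1
    have hzlt : ζ y < ζ a := by
      by_contra h
      push_neg at h
      rcases eq_or_lt_of_le h with h' | h'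
      · have : H' y = H' a := by rw [← hzy2, ← h', hza2]
        linarith
      · have := hH'inc hza1 hzy1 h'
        rw [hzy2, hza2] at this; linarith
    exact ⟨hzy1, hzy2, hlt, hzlt⟩
  -- Tendsto ζ (𝓝[Ioo a astar] a) (𝓝 (ζ a))
  have htζ : Tendsto ζ (𝓝[Ioo a astar] a) (𝓝 (ζ a)) := by
    have hH'tend : Tendsto H' (𝓝[Ioo a astar] a) (𝓝 (H' a)) := by
      have := (hH'cont a (le_of_lt ha0)).tendsto
      exact this.mono_left (nhdsWithin_mono a (fun y hy => le_of_lt (lt_trans ha0 hy.1)))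
    rw [tendsto_order]
    constructor
    · intro l hl
      rcases le_or_gt l astar with hlb | hlb
      · filter_upwards [self_mem_nhdsWithin] with y hy
        exact lt_of_le_of_lt hlb (key y hy).1
      · have hH'l : H' l < H' a := by
          have := hH'inc hlb hza1 hl
          rwa [hza2] at this
        filter_upwards [hH'tend.eventually (lt_mem_nhds hH'l), self_mem_nhdsWithin] with y hy1 hy2
        by_contra h
        push_neg at h
        have hge : H' (ζ y) ≤ H' l := by
          rcases eq_or_lt_of_le h with h' | h'
          · rw [h']
          · exact le_of_lt (hH'inc (key y hy2).1 hlb h')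
        rw [(key y hy2).2.1] at hge
        linarith
    · intro m hm
      filter_upwards [self_mem_nhdsWithin] with y hy
      exact lt_trans (key y hy).2.2.2 hm
  -- Tendsto of slope of H' at a
  have hslopeA : Tendsto (slope H' a) (𝓝[Ioo a astar] a) (𝓝 dp) := by
    have := (hasDerivWithinAt_iff_tendsto_slope).mp hdp
    rw [Set.Ici_sdiff_left] at this
    exact this.mono_left (nhdsWithin_mono a (fun y hy => hy.1))
  -- Tendsto of slope of H' at ζ a composed with ζ
  have hslopeZ : Tendsto (fun y => slope H' (ζ a) (ζ y)) (𝓝[Ioo a astar] a) (𝓝 dm) := by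
    have h1 : Tendsto (slope H' (ζ a)) (𝓝[Iio (ζ a)] (ζ a)) (𝓝 dm) := by
      have := (hasDerivWithinAt_iff_tendsto_slope).mp hdm
      rwa [Set.Iic_diff_right] at this
    have h2 : Tendsto ζ (𝓝[Ioo a astar] a) (𝓝[Iio (ζ a)] (ζ a)) := by
      apply tendsto_nhdsWithin_of_tendsto_nhds_of_eventually_within _ htζ
      filter_upwards [self_mem_nhdsWithin] with y hy
      exact (key y hy).2.2.2
    exact h1.comp h2
  have hdiv : Tendsto (fun y => slope H' a y / slope H' (ζ a) (ζ y)) (𝓝[Ioo a astar] a)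
      (𝓝 (dp / dm)) := hslopeA.div hslopeZ (ne_of_gt hdmpos)
  -- the slopes identity
  have heq : ∀ y ∈ Ioo a astar, slope H' a y / slope H' (ζ a) (ζ y) = slope ζ a y := by
    intro y hy
    obtain ⟨_, hzy2, hlt, hzlt⟩ := key y hy
    have hA : H' y - H' a ≠ 0 := by linarith
    have hB : y - a ≠ 0 := by have := hy.1; intro h; apply absurd this; linarith [sub_eq_zero.mp h]
    have hC : ζ y - ζ a ≠ 0 := by intro h; apply absurd hzlt; linarith [sub_eq_zero.mp h]
    simp only [slope_def_field, hzy2, hza2]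
    field_simp
  have hmain : HasDerivWithinAt ζ (dp / dm) (Ico a astar) a := by
    rw [hasDerivWithinAt_iff_tendsto_slope, Set.Ico_diff_left]
    refine hdiv.congr' ?_
    filter_upwards [self_mem_nhdsWithin] with y hy
    exact heq y hy
  have hfinal : HasDerivWithinAt ζ (dp / dm) (Ici a) a :=
    hmain.mono_of_mem_nhdsWithin (Ico_mem_nhdsGE_of_mem ⟨le_refl a, haa⟩)
  exact ⟨dp, dm, hdp, hdpneg, hdm, hdmpos, hfinal, div_neg_of_neg_of_pos hdpneg hdmpos⟩
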